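/- Let G be a connected Lie group, Γ ≤ G a dense subgroup, and define G₁ = closure of [G,G]. Then [Γ,Γ] is dense in G₁; more generally, for the derived series Γ^{(n)} and the sequence G_{n+1} = closure of [G_n,G_n], the subgroup Γ^{(n)} ∩ G_n is dense in G_n for all n. -/

import Mathlib

open scoped commutatorElement

/-- Let `G` be a connected (Lie) group and `Γ ≤ G` dense. With `G₀ = G`,
`G_{n+1} = closure [G_n, G_n]`, and `Γ⁽⁰⁾ = Γ`, `Γ⁽ⁿ⁺¹⁾ = [Γ⁽ⁿ⁾, Γ⁽ⁿ⁾]` the derived series of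
`Γ`, the subgroup `Γ⁽ⁿ⁾ ∩ G_n` is dense in `G_n` for every `n`; in particular (`n = 1`)
`[Γ,Γ]` is dense in the closure of `[G,G]`. -/
theorem stmt18 {G : Type*} [Group G] [TopologicalSpace G] [IsTopologicalGroup G]
    [ConnectedSpace G]
    (Γ : Subgroup G) (hΓ : Dense (Γ : Set G))
    (D : ℕ → Subgroup G) (hD0 : D 0 = ⊤)
    (hDsucc : ∀ n, D (n + 1) = (⁅D n, D n⁆ : Subgroup G).topologicalClosure)
    (C : ℕ → Subgroup G) (hC0 : C 0 = Γ)
    (hCsucc : ∀ n, C (n + 1) = (⁅C n, C n⁆ : Subgroup G)) :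
    ∀ n, ((D n : Subgroup G) : Set G) ⊆
      closure (((C n : Subgroup G) : Set G) ∩ ((D n : Subgroup G) : Set G)) := by
  intro n
  induction n with
  | zero =>
    rw [hD0, hC0]
    intro x _
    have h : ((Γ : Set G) ∩ (((⊤ : Subgroup G) : Subgroup G) : Set G)) = (Γ : Set G) := by
      simp
    rw [h]
    exact hΓ x
  | succ n ih =>
    set H : Subgroup G := C n ⊓ D n with hH
    have hIH : ((D n : Subgroup G) : Set G) ⊆ closure (H : Set G) := by
      simpa [hH, Subgroup.coe_inf] using ih
    set K : Subgroup G := ⁅H, H⁆ with hK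
    have hcont : Continuous fun p : G × G => ⁅p.1, p.2⁆ := by
      simp only [commutatorElement_def]
      fun_prop
    have key : ∀ a ∈ closure (H : Set G), ∀ b ∈ closure (H : Set G),
        ⁅a, b⁆ ∈ closure (K : Set G) := by
      intro a ha b hb
      have hmem : (a, b) ∈ closure ((H : Set G) ×ˢ (H : Set G)) := by
        rw [closure_prod_eq]; exact ⟨ha, hb⟩
      have himg : (fun p : G × G => ⁅p.1, p.2⁆) '' ((H : Set G) ×ˢ (H : Set G))
          ⊆ (K : Set G) := by
        rintro _ ⟨⟨x, y⟩, ⟨hx, hy⟩, rfl⟩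
        exact Subgroup.commutator_mem_commutator hx hy
      have h1 : ⁅a, b⁆ ∈ closure ((fun p : G × G => ⁅p.1, p.2⁆) ''
          ((H : Set G) ×ˢ (H : Set G))) :=
        image_closure_subset_closure_image hcont ⟨(a, b), hmem, rfl⟩
      exact closure_mono himg h1
    have hDK : ⁅D n, D n⁆ ≤ K.topologicalClosure := by
      rw [Subgroup.commutator_le]
      intro g hg h hh
      exact key g (hIH hg) h (hIH hh)
    have hKC : K ≤ C (n + 1) := by
      rw [hCsucc]
      exact Subgroup.commutator_mono inf_le_left inf_le_left
    have hKD : K ≤ D (n + 1) := by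
      rw [hDsucc]
      exact le_trans (Subgroup.commutator_mono inf_le_right inf_le_right)
        (Subgroup.le_topologicalClosure _)
    intro x hx
    rw [hDsucc] at hx
    have hx' : x ∈ closure (K : Set G) := by
      have h1 : closure ((⁅D n, D n⁆ : Subgroup G) : Set G) ⊆
          closure (K.topologicalClosure : Set G) := closure_mono hDK
      have h2 := h1 hx
      simpa [Subgroup.topologicalClosure_coe, closure_closure] using h2
    have hsub : (K : Set G) ⊆
        ((C (n + 1) : Subgroup G) : Set G) ∩ ((D (n + 1) : Subgroup G) : Set G) :=
      fun y hy => ⟨hKC hy, hKD hy⟩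
    exact closure_mono hsub hx'
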